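/- Let n ≥ 1 and let D, g : ZMod n → ZMod n → ℝ satisfy: D is symmetric, nonnegative, and D i i = 0 for all i; g is symmetric with g i i = 0 for all i; and for all i ≠ j, g i j + g (i+1)(j+1) ≥ g i (j+1) + g (i+1) j (strong subadditivity of g). Then Σ_{i,j ∈ ZMod n} (D(i,j) + D(i+1,j+1) − D(i,j+1) − D(i+1,j)) · g(i+1,j+1) ≥ 0. (By shifting summation indices this sum equals Σ_{i,j} D(i,j) · (g(i,j) + g(i+1,j+1) − g(i,j+1) − g(i+1,j)), i.e., a nonnegative combination of conditional mutual informations; this is the core of the identity reducing a holographic entropy inequality to instances of strong subadditivity.) -/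
import Mathlib


/-- For functions `D, g : ZMod n → ZMod n → ℝ` with `D` symmetric, nonnegative, vanishing
on the diagonal, and `g` symmetric, vanishing on the diagonal, and strongly subadditive
(`g i j + g (i+1)(j+1) ≥ g i (j+1) + g (i+1) j` for `i ≠ j`), the sum
`Σ_{i,j} (D(i,j) + D(i+1,j+1) − D(i,j+1) − D(i+1,j)) · g(i+1,j+1)` is nonnegative. -/
theorem second_difference_pairing_nonneg {n : ℕ} [NeZero n]
    (D g : ZMod n → ZMod n → ℝ)
    (hDsymm : ∀ i j, D i j = D j i) (hDnn : ∀ i j, 0 ≤ D i j) (hD0 : ∀ i, D i i = 0)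
    (hgsymm : ∀ i j, g i j = g j i) (hg0 : ∀ i, g i i = 0)
    (hssa : ∀ i j : ZMod n, i ≠ j →
      g i (j + 1) + g (i + 1) j ≤ g i j + g (i + 1) (j + 1)) :
    0 ≤ ∑ i : ZMod n, ∑ j : ZMod n,
      (D i j + D (i + 1) (j + 1) - D i (j + 1) - D (i + 1) j) * g (i + 1) (j + 1) := by
  have shift : ∀ F : ZMod n → ℝ, ∑ i : ZMod n, F (i + 1) = ∑ i : ZMod n, F i :=
    fun F => Fintype.sum_equiv (Equiv.addRight (1 : ZMod n)) _ _ (fun i => rfl)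
  have h2 : (∑ i : ZMod n, ∑ j : ZMod n, D (i+1) (j+1) * g (i+1) (j+1))
      = ∑ i : ZMod n, ∑ j : ZMod n, D i j * g i j := by
    calc (∑ i : ZMod n, ∑ j : ZMod n, D (i+1) (j+1) * g (i+1) (j+1))
        = ∑ i : ZMod n, ∑ j : ZMod n, D i (j+1) * g i (j+1) :=
          shift (fun i => ∑ j : ZMod n, D i (j+1) * g i (j+1))
      _ = ∑ i : ZMod n, ∑ j : ZMod n, D i j * g i j :=
          Finset.sum_congr rfl fun i _ => shift (fun j => D i j * g i j)
  have h3 : (∑ i : ZMod n, ∑ j : ZMod n, D i (j+1) * g (i+1) (j+1))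
      = ∑ i : ZMod n, ∑ j : ZMod n, D i j * g (i+1) j :=
    Finset.sum_congr rfl fun i _ => shift (fun j => D i j * g (i+1) j)
  have h4 : (∑ i : ZMod n, ∑ j : ZMod n, D (i+1) j * g (i+1) (j+1))
      = ∑ i : ZMod n, ∑ j : ZMod n, D i j * g i (j+1) :=
    shift (fun i => ∑ j : ZMod n, D i j * g i (j+1))
  have key : (∑ i : ZMod n, ∑ j : ZMod n,
      (D i j + D (i + 1) (j + 1) - D i (j + 1) - D (i + 1) j) * g (i + 1) (j + 1))
      = ∑ i : ZMod n, ∑ j : ZMod n,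
        D i j * (g i j + g (i + 1) (j + 1) - g i (j + 1) - g (i + 1) j) := by
    simp only [sub_mul, add_mul, mul_add, mul_sub, Finset.sum_add_distrib,
      Finset.sum_sub_distrib]
    rw [h2, h3, h4]
    ring
  rw [key]
  refine Finset.sum_nonneg fun i _ => Finset.sum_nonneg fun j _ => ?_
  by_cases h : i = j
  · subst h; simp [hD0]
  · have := hssa i j h
    have hD := hDnn i j
    nlinarith [hDnn i j, hssa i j h]
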